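/- Let (S₁, d₁) and (S₂, d₂) be metric spaces, (ξₙ) and ξ random elements of S₁ with ξₙ → ξ in distribution. Let F : S₁ → S₂ and Fₙ : S₁ → S₂ be measurable, and let C be a Borel subset of S₁ with P(ξ ∈ C) = 1 such that whenever sₙ → s in S₁ with s ∈ C, one has Fₙ(sₙ) → F(s) in S₂. Then Fₙ(ξₙ) → F(ξ) in distribution. -/

import Mathlib

open MeasureTheory Filter Topology BoundedContinuousFunction
open scoped ENNReal NNReal

/-- Auxiliary: a strictly increasing selection of bad indices, giving a contradiction with
the continuous-convergence hypothesis. Shows that a point of `C` mapped into an open set `G`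
lies in one of the approximating sets. -/
lemma stmt_16_aux {S₁ S₂ : Type*} [MetricSpace S₁] [MetricSpace S₂]
    (F : S₁ → S₂) (Fn : ℕ → S₁ → S₂) (C : Set S₁)
    (hFconv : ∀ s ∈ C, ∀ u : ℕ → S₁, Tendsto u atTop (𝓝 s) →
      Tendsto (fun n => Fn n (u n)) atTop (𝓝 (F s)))
    {G : Set S₂} (hG : IsOpen G) {s : S₁} (hs : s ∈ C) (hFs : F s ∈ G) :
    ∃ j : ℕ, ∀ n ≥ j, ∀ t : S₁, dist s t < 1 / (j + 1) → Fn n t ∈ G := by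
  classical
  by_contra hcon
  push_neg at hcon
  -- transform the witnesses into pairs
  have choice : ∀ j : ℕ, ∃ p : ℕ × S₁,
      j ≤ p.1 ∧ dist s p.2 < 1 / (j + 1) ∧ Fn p.1 p.2 ∉ G := by
    intro j
    obtain ⟨n, hn, t, ht, htG⟩ := hcon j
    exact ⟨⟨n, t⟩, hn, ht, htG⟩
  set g : ℕ → ℕ × S₁ := fun j => (choice j).choose with hg_def
  have hg : ∀ j, j ≤ (g j).1 ∧ dist s (g j).2 < 1 / (j + 1) ∧ Fn (g j).1 (g j).2 ∉ G :=
    fun j => (choice j).choose_spec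
  -- recursive selection, strictly increasing in the first coordinate
  set f : ℕ → ℕ × S₁ := fun k => Nat.rec (g 0) (fun _ p => g (p.1 + 1)) k with hf_def
  have hf0 : f 0 = g 0 := rfl
  have hfs : ∀ k, f (k + 1) = g ((f k).1 + 1) := fun k => rfl
  set φ : ℕ → ℕ := fun k => (f k).1 with hφ_def
  have hφmono : StrictMono φ := by
    apply strictMono_nat_of_lt_succ
    intro k
    have := (hg ((f k).1 + 1)).1
    simpa [hφ_def, hfs k] using lt_of_lt_of_le (Nat.lt_succ_self _) this
  have hφge : ∀ k, k ≤ φ k := fun k => hφmono.le_apply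
  have hdist : ∀ k, dist s (f k).2 < 1 / (k + 1) := by
    intro k
    cases k with
    | zero => simpa [hf0] using (hg 0).2.1
    | succ k =>
      have h1 := (hg ((f k).1 + 1)).2.1
      rw [← hfs k] at h1
      refine lt_of_lt_of_le h1 ?_
      apply one_div_le_one_div_of_le
      · positivity
      · have h' : (k : ℝ) ≤ ((f k).1 : ℝ) := by exact_mod_cast hφge k
        push_cast
        linarith
  have hbad : ∀ k, Fn (φ k) (f k).2 ∉ G := by
    intro k
    cases k with
    | zero => exact (hg 0).2.2
    | succ k => rw [hφ_def]; rw [hfs k]; exact (hg ((f k).1 + 1)).2.2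
  -- the approximating sequence
  set u : ℕ → S₁ := fun n => if h : ∃ k, φ k = n then (f h.choose).2 else s with hu_def
  have hu_at : ∀ k, u (φ k) = (f k).2 := by
    intro k
    have h : ∃ k', φ k' = φ k := ⟨k, rfl⟩
    have : h.choose = k := hφmono.injective h.choose_spec
    simp only [hu_def, dif_pos h, this]
  have hu_tendsto : Tendsto u atTop (𝓝 s) := by
    rw [Metric.tendsto_atTop]
    intro ε hε
    obtain ⟨K, hK⟩ := exists_nat_gt (1 / ε)
    refine ⟨φ K + 1, fun n hn => ?_⟩
    by_cases h : ∃ k, φ k = n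
    · have hu : u n = (f h.choose).2 := by simp only [hu_def, dif_pos h]
      have hKlt : K < h.choose := by
        have : φ K < φ h.choose := by rw [h.choose_spec]; omega
        exact hφmono.lt_iff_lt.mp this
      have hd := hdist h.choose
      rw [hu, dist_comm]
      refine lt_of_lt_of_le hd ?_
      rw [div_le_iff₀ (by positivity)]
      rw [div_lt_iff₀ hε] at hK
      have : (K : ℝ) + 1 ≤ (h.choose : ℝ) + 1 := by
        have h' : (K : ℝ) ≤ (h.choose : ℝ) := by exact_mod_cast hKlt.le
        linarith
      nlinarith [hε.le]
    · simp only [hu_def, dif_neg h, dist_self]; exact hε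
  have htend := hFconv s hs u hu_tendsto
  have hev : ∀ᶠ n in atTop, Fn n (u n) ∈ G := htend (hG.mem_nhds hFs)
  obtain ⟨N, hN⟩ := eventually_atTop.mp hev
  have := hN (φ N) (hφge N)
  rw [hu_at N] at this
  exact hbad N this

/-- Extended continuous mapping theorem (Kallenberg, Theorem 3.27). -/
theorem stmt_16 {Ω : Type*} [MeasurableSpace Ω] (μ : Measure Ω) [IsProbabilityMeasure μ]
    {S₁ S₂ : Type*} [MetricSpace S₁] [MeasurableSpace S₁] [BorelSpace S₁]
    [MetricSpace S₂] [MeasurableSpace S₂] [BorelSpace S₂]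
    (ξ : ℕ → Ω → S₁) (ξlim : Ω → S₁)
    (hξmeas : ∀ n, Measurable (ξ n)) (hξlimmeas : Measurable ξlim)
    (hconv : ∀ g : S₁ →ᵇ ℝ,
      Tendsto (fun n => ∫ ω, g (ξ n ω) ∂μ) atTop (𝓝 (∫ ω, g (ξlim ω) ∂μ)))
    (F : S₁ → S₂) (Fn : ℕ → S₁ → S₂)
    (hF : Measurable F) (hFn : ∀ n, Measurable (Fn n))
    (C : Set S₁) (hC : MeasurableSet C) (hμC : μ (ξlim ⁻¹' C) = 1)
    (hFconv : ∀ s ∈ C, ∀ u : ℕ → S₁, Tendsto u atTop (𝓝 s) →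
      Tendsto (fun n => Fn n (u n)) atTop (𝓝 (F s))) :
    ∀ g : S₂ →ᵇ ℝ,
      Tendsto (fun n => ∫ ω, g (Fn n (ξ n ω)) ∂μ) atTop (𝓝 (∫ ω, g (F (ξlim ω)) ∂μ)) := by
  -- the laws as probability measures
  have hFnξ : ∀ n, Measurable (fun ω => Fn n (ξ n ω)) := fun n => (hFn n).comp (hξmeas n)
  have hFξ : Measurable (fun ω => F (ξlim ω)) := hF.comp hξlimmeas
  haveI : ∀ n, IsProbabilityMeasure (μ.map (ξ n)) :=
    fun n => Measure.isProbabilityMeasure_map (hξmeas n).aemeasurable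
  haveI : IsProbabilityMeasure (μ.map ξlim) := Measure.isProbabilityMeasure_map hξlimmeas.aemeasurable
  haveI : ∀ n, IsProbabilityMeasure (μ.map (fun ω => Fn n (ξ n ω))) :=
    fun n => Measure.isProbabilityMeasure_map (hFnξ n).aemeasurable
  haveI : IsProbabilityMeasure (μ.map (fun ω => F (ξlim ω))) :=
    Measure.isProbabilityMeasure_map hFξ.aemeasurable
  set μn : ℕ → ProbabilityMeasure S₁ := fun n => ⟨μ.map (ξ n), inferInstance⟩ with hμn_def
  set μL : ProbabilityMeasure S₁ := ⟨μ.map ξlim, inferInstance⟩ with hμL_def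
  set νn : ℕ → ProbabilityMeasure S₂ :=
    fun n => ⟨μ.map (fun ω => Fn n (ξ n ω)), inferInstance⟩ with hνn_def
  set ν : ProbabilityMeasure S₂ := ⟨μ.map (fun ω => F (ξlim ω)), inferInstance⟩ with hν_def
  -- weak convergence of the laws of ξₙ
  have hμn_tendsto : Tendsto μn atTop (𝓝 μL) := by
    rw [ProbabilityMeasure.tendsto_iff_forall_integral_tendsto]
    intro f
    have h1 : ∀ n, ∫ x, f x ∂(μn n : Measure S₁) = ∫ ω, f (ξ n ω) ∂μ := fun n =>
      integral_map (hξmeas n).aemeasurable f.continuous.measurable.aestronglyMeasurable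
    have h2 : ∫ x, f x ∂(μL : Measure S₁) = ∫ ω, f (ξlim ω) ∂μ :=
      integral_map hξlimmeas.aemeasurable f.continuous.measurable.aestronglyMeasurable
    simp only [h1, h2]
    exact hconv f
  -- the key liminf inequality on open sets, in ℝ≥0∞
  have key : ∀ G : Set S₂, IsOpen G →
      (ν : Measure S₂) G ≤ atTop.liminf (fun n => (νn n : Measure S₂) G) := by
    intro G hG
    -- approximating sets
    set A : ℕ → ℕ → Set S₁ :=
      fun m k => {s | ∀ n ≥ k, ∀ t : S₁, dist s t < 1 / (m + 1) → Fn n t ∈ G} with hA_def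
    have hAmono : ∀ m m' k k', m ≤ m' → k ≤ k' → A m k ⊆ A m' k' := by
      intro m m' k k' hm hk s hs n hn t ht
      refine hs n (le_trans hk hn) t (lt_of_lt_of_le ht ?_)
      apply one_div_le_one_div_of_le
      · positivity
      · have h' : (m : ℝ) ≤ (m' : ℝ) := by exact_mod_cast hm
        linarith
    -- (a) C ∩ F⁻¹' G is covered by the A j j
    have hcover : C ∩ F ⁻¹' G ⊆ ⋃ j, A j j := by
      rintro s ⟨hsC, hsG⟩
      obtain ⟨j, hj⟩ := stmt_16_aux F Fn C hFconv hG hsC hsG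
      exact Set.mem_iUnion.mpr ⟨j, hj⟩
    -- (b) A j j is contained in the interior of A (2j+1) j
    have hint : ∀ j, A j j ⊆ interior (A (2 * j + 1) j) := by
      intro j s hs
      rw [mem_interior]
      refine ⟨Metric.ball s (1 / (2 * (j : ℝ) + 2)), ?_, Metric.isOpen_ball, ?_⟩
      · intro s' hs'
        rw [Metric.mem_ball] at hs'
        intro n hn t ht
        refine hs n hn t ?_
        have hd : dist s t ≤ dist s s' + dist s' t := dist_triangle s s' t
        have h1 : dist s s' < 1 / (2 * (j : ℝ) + 2) := by rwa [dist_comm]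
        have h2 : dist s' t < 1 / (2 * (j : ℝ) + 2) := by
          refine lt_of_lt_of_le ht ?_
          apply le_of_eq; push_cast; ring_nf
        have hpos : (0 : ℝ) < (j : ℝ) + 1 := by positivity
        calc dist s t < 1 / (2 * (j : ℝ) + 2) + 1 / (2 * (j : ℝ) + 2) := by linarith
          _ = 1 / ((j : ℝ) + 1) := by field_simp; ring
      · rw [Metric.mem_ball, dist_self]; positivity
    -- (c) A (2j+1) j maps into G under Fn n for n ≥ j
    have hsub : ∀ j n, j ≤ n → A (2 * j + 1) j ⊆ (Fn n) ⁻¹' G := by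
      intro j n hn s hs
      exact hs n hn s (by rw [dist_self]; positivity)
    -- main estimate
    have hνG : (ν : Measure S₂) G = μ ((fun ω => F (ξlim ω)) ⁻¹' G) := by
      rw [hν_def]
      exact Measure.map_apply hFξ hG.measurableSet
    have hDc : μ ((ξlim ⁻¹' C)ᶜ) = 0 := by
      rw [measure_compl (hξlimmeas hC) (measure_ne_top μ _), hμC,
        measure_univ, tsub_self]
    have step1 : (ν : Measure S₂) G ≤ μ (ξlim ⁻¹' (⋃ j, A j j)) := by
      rw [hνG]
      have : (fun ω => F (ξlim ω)) ⁻¹' G ⊆ (ξlim ⁻¹' (⋃ j, A j j)) ∪ (ξlim ⁻¹' C)ᶜ := by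
        intro ω hω
        by_cases hωC : ξlim ω ∈ C
        · exact Or.inl (hcover ⟨hωC, hω⟩)
        · exact Or.inr hωC
      calc μ ((fun ω => F (ξlim ω)) ⁻¹' G)
          ≤ μ ((ξlim ⁻¹' (⋃ j, A j j)) ∪ (ξlim ⁻¹' C)ᶜ) := measure_mono this
        _ ≤ μ (ξlim ⁻¹' (⋃ j, A j j)) + μ ((ξlim ⁻¹' C)ᶜ) := measure_union_le _ _
        _ = μ (ξlim ⁻¹' (⋃ j, A j j)) := by rw [hDc, add_zero]
    have hmono2 : Monotone (fun j => ξlim ⁻¹' (A j j)) := by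
      intro a b hab
      exact Set.preimage_mono (hAmono a b a b hab hab)
    have step2 : μ (ξlim ⁻¹' (⋃ j, A j j)) = ⨆ j, μ (ξlim ⁻¹' (A j j)) := by
      rw [Set.preimage_iUnion]
      exact hmono2.measure_iUnion
    refine le_trans (step1.trans step2.le) (iSup_le fun j => ?_)
    -- pass to the interior, an open set
    have hIo : IsOpen (interior (A (2 * j + 1) j)) := isOpen_interior
    have e1 : μ (ξlim ⁻¹' (A j j)) ≤ (μL : Measure S₁) (interior (A (2 * j + 1) j)) := by
      rw [hμL_def]
      show μ (ξlim ⁻¹' (A j j)) ≤ (μ.map ξlim) (interior (A (2 * j + 1) j))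
      rw [Measure.map_apply hξlimmeas hIo.measurableSet]
      exact measure_mono (Set.preimage_mono (hint j))
    have e2 : (μL : Measure S₁) (interior (A (2 * j + 1) j)) ≤
        atTop.liminf (fun n => (μn n : Measure S₁) (interior (A (2 * j + 1) j))) :=
      ProbabilityMeasure.le_liminf_measure_open_of_tendsto hμn_tendsto hIo
    have e3 : atTop.liminf (fun n => (μn n : Measure S₁) (interior (A (2 * j + 1) j))) ≤
        atTop.liminf (fun n => (νn n : Measure S₂) G) := by
      refine Filter.liminf_le_liminf ?_ ?_ ?_
      · filter_upwards [eventually_ge_atTop j] with n hn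
        show (μ.map (ξ n)) (interior (A (2 * j + 1) j)) ≤ (μ.map (fun ω => Fn n (ξ n ω))) G
        rw [Measure.map_apply (hξmeas n) hIo.measurableSet,
          Measure.map_apply (hFnξ n) hG.measurableSet]
        apply measure_mono
        intro ω hω
        exact hsub j n hn (interior_subset hω)
      · exact ⟨0, by simp⟩
      · exact Filter.IsBoundedUnder.isCoboundedUnder_ge
          (Filter.isBoundedUnder_of ⟨1, fun n => prob_le_one⟩)
    exact e1.trans (e2.trans e3)
  -- convert the key inequality to the ℝ≥0-valued statement
  have h_opens : ∀ G, IsOpen G → ν G ≤ atTop.liminf (fun n => νn n G) := by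
    intro G hG
    have hkey := key G hG
    have aux : (ENNReal.ofNNReal (atTop.liminf (fun n => νn n G))) =
        atTop.liminf (fun n => ((νn n G : ℝ≥0∞))) := by
      refine Monotone.map_liminf_of_continuousAt (F := atTop) ENNReal.coe_mono (fun n => νn n G)
        ENNReal.continuous_coe.continuousAt ?_ ?_
      · exact Filter.IsBoundedUnder.isCoboundedUnder_ge ⟨1, by simp⟩
      · exact ⟨0, by simp⟩
    rw [← ENNReal.coe_le_coe, aux]
    simpa only [ProbabilityMeasure.ennreal_coeFn_eq_coeFn_toMeasure] using hkey
  have hν_tendsto : Tendsto νn atTop (𝓝 ν) :=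
    MeasureTheory.tendsto_of_forall_isOpen_le_liminf h_opens
  -- conclude
  intro g
  have := ProbabilityMeasure.tendsto_iff_forall_integral_tendsto.mp hν_tendsto g
  have h1 : ∀ n, ∫ x, g x ∂(νn n : Measure S₂) = ∫ ω, g (Fn n (ξ n ω)) ∂μ := fun n =>
    integral_map (hFnξ n).aemeasurable g.continuous.measurable.aestronglyMeasurable
  have h2 : ∫ x, g x ∂(ν : Measure S₂) = ∫ ω, g (F (ξlim ω)) ∂μ :=
    integral_map hFξ.aemeasurable g.continuous.measurable.aestronglyMeasurable
  simpa only [h1, h2] using this
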